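/- arXiv:2207.06016 — 2 statements merged into one kernel-verified Lean document; each statement's English description precedes it below -/
import Mathlib

section
/- Let A be an n×n irreducible nonnegative real matrix (n ≥ 2) with entries a_{i,j}, and let x ∈ ℝ^n have all entries positive. Suppose x is not a Perron vector of A. (i) If min_{1≤i≤n} (A²x)_i/(Ax)_i ≥ (Ax)_j/x_j for every j ∈ {1,…,n}, then min_{1≤i≤n} (A²x)_i/(Ax)_i > min_{1≤i≤n} (Ax)_i/x_i. (ii) If there exist indices i_0, j_0 ∈ {1,…,n} such that (Ax)_{j_0}/x_{j_0} > min_{1≤i≤n} (A²x)_i/(Ax)_i = (A²x)_{i_0}/(Ax)_{i_0} and a_{i_0,j_0} ≠ 0, then min_{1≤i≤n} (A²x)_i/(Ax)_i > min_{1≤i≤n} (Ax)_i/x_i. -/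
open Matrix

/-- A square matrix is irreducible if no permutation similarity puts it in block
upper triangular form; equivalently, for every nonempty proper subset `S` of indices
there are `i ∈ S` and `j ∉ S` with `A i j ≠ 0`. -/
def IsIrreducibleMatrix {n : ℕ} (A : Matrix (Fin n) (Fin n) ℝ) : Prop :=
  ∀ S : Finset (Fin n), S.Nonempty → S ≠ Finset.univ → ∃ i ∈ S, ∃ j, j ∉ S ∧ A i j ≠ 0

/-- The Perron value (spectral radius) of a real square matrix: the supremum of the
absolute values of its complex eigenvalues (roots of the characteristic polynomial). -/
noncomputable def perronValue {n : ℕ} (A : Matrix (Fin n) (Fin n) ℝ) : ℝ :=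
  sSup {r : ℝ | ∃ μ : ℂ, ((A.map Complex.ofReal).charpoly).IsRoot μ ∧ r = ‖μ‖}

/-- A Perron vector of `A`: an eigenvector associated with the Perron value of `A`. -/
def IsPerronVector {n : ℕ} (A : Matrix (Fin n) (Fin n) ℝ) (x : Fin n → ℝ) : Prop :=
  x ≠ 0 ∧ A.mulVec x = perronValue A • x

lemma eval_charpoly_aux {n : ℕ} (M : Matrix (Fin n) (Fin n) ℂ) (t : ℂ) :
    M.charpoly.eval t = (Matrix.diagonal (fun _ => t) - M).det := by
  have h := RingHom.map_det (Polynomial.evalRingHom t) (charmatrix M)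
  rw [Matrix.charpoly]
  show (Polynomial.evalRingHom t) M.charmatrix.det = _
  rw [h]
  congr 1
  ext i j
  rcases eq_or_ne i j with rfl | hij
  · simp [charmatrix_apply_eq]
  · simp [charmatrix_apply_ne _ _ _ hij, Matrix.diagonal_apply_ne _ hij]

lemma mulVec_pos_aux {n : ℕ} (hn : 2 ≤ n) (A : Matrix (Fin n) (Fin n) ℝ)
    (hirr : IsIrreducibleMatrix A) (hnonneg : ∀ i j, 0 ≤ A i j)
    {x : Fin n → ℝ} (hx : ∀ i, 0 < x i) : ∀ i, 0 < A.mulVec x i := by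
  intro i
  have hne : ({i} : Finset (Fin n)) ≠ Finset.univ := by
    intro h
    have := Finset.card_univ (α := Fin n)
    rw [← h] at this
    simp [Fintype.card_fin] at this
    omega
  obtain ⟨i', hi', j, hj, hij⟩ := hirr {i} ⟨i, Finset.mem_singleton_self i⟩ hne
  rw [Finset.mem_singleton] at hi'
  rw [hi'] at hij
  simp only [Matrix.mulVec, dotProduct]
  apply Finset.sum_pos' (fun k _ => mul_nonneg (hnonneg i k) (hx k).le)
  exact ⟨j, Finset.mem_univ j, mul_pos (lt_of_le_of_ne (hnonneg i j) (Ne.symm hij)) (hx j)⟩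

lemma perronValue_eq_aux {n : ℕ} (hn : 0 < n) (A : Matrix (Fin n) (Fin n) ℝ)
    (hnonneg : ∀ i j, 0 ≤ A i j) {x : Fin n → ℝ} {m : ℝ}
    (hx : ∀ i, 0 < x i) (hm : 0 ≤ m) (heig : A.mulVec x = m • x) :
    perronValue A = m := by
  set B := A.map Complex.ofReal with hB
  have hBapp : ∀ i j, B i j = (A i j : ℂ) := fun i j => rfl
  have hBmul : ∀ (v : Fin n → ℂ) (i : Fin n),
      B.mulVec v i = ∑ j, (A i j : ℂ) * v j := by
    intro v i
    simp only [Matrix.mulVec, dotProduct, hB, Matrix.map_apply]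
  -- m is a root of the charpoly
  have hxc : (fun i => (x i : ℂ)) ≠ 0 := by
    intro h
    have := congrFun h ⟨0, hn⟩
    simp only [Pi.zero_apply, Complex.ofReal_eq_zero] at this
    exact (hx ⟨0, hn⟩).ne' this
  have hroot : B.charpoly.IsRoot (m : ℂ) := by
    rw [Polynomial.IsRoot, eval_charpoly_aux]
    rw [← Matrix.exists_mulVec_eq_zero_iff]
    refine ⟨fun i => (x i : ℂ), hxc, ?_⟩
    funext i
    simp only [Matrix.sub_mulVec, Pi.sub_apply, Pi.zero_apply, Matrix.mulVec_diagonal, hBmul]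
    have hAx : ∑ j, A i j * x j = m * x i := by
      have := congrFun heig i
      simp only [Matrix.mulVec, dotProduct] at this
      simpa using this
    rw [sub_eq_zero]
    calc ((m : ℂ) * (x i : ℂ)) = ((m * x i : ℝ) : ℂ) := by push_cast; ring
      _ = ((∑ j, A i j * x j : ℝ) : ℂ) := by rw [hAx]
      _ = ∑ j, ((A i j : ℂ) * (x j : ℂ)) := by push_cast; rfl
  -- every root has absolute value at most m
  have hbound : ∀ μ : ℂ, B.charpoly.IsRoot μ → ‖μ‖ ≤ m := by
    intro μ hμ
    rw [Polynomial.IsRoot, eval_charpoly_aux, ← Matrix.exists_mulVec_eq_zero_iff] at hμ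
    obtain ⟨v, hv0, hv⟩ := hμ
    have hv' : ∀ i, μ * v i = ∑ j, (A i j : ℂ) * v j := by
      intro i
      have := congrFun hv i
      simp only [Matrix.sub_mulVec, Pi.sub_apply, Pi.zero_apply, Matrix.mulVec_diagonal,
        hBmul] at this
      exact sub_eq_zero.mp this
    obtain ⟨i, _, hi⟩ := Finset.exists_max_image Finset.univ
      (fun i => ‖v i‖ / x i) ⟨⟨0, hn⟩, Finset.mem_univ _⟩
    set c := ‖v i‖ / x i with hc
    have hk : ∃ k, v k ≠ 0 := by
      by_contra h
      push_neg at h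
      exact hv0 (funext fun k => h k)
    obtain ⟨k, hk⟩ := hk
    have hcpos : 0 < c :=
      lt_of_lt_of_le (div_pos (norm_pos_iff.mpr hk) (hx k)) (hi k (Finset.mem_univ k))
    have hle : ∀ j, ‖v j‖ ≤ c * x j := by
      intro j
      have := hi j (Finset.mem_univ j)
      rwa [div_le_iff₀ (hx j)] at this
    have hvi : ‖v i‖ = c * x i := by
      rw [hc, div_mul_cancel₀]
      exact (hx i).ne'
    have hAx : ∑ j, A i j * x j = m * x i := by
      have := congrFun heig i
      rw [Matrix.mulVec, dotProduct] at this
      simpa using this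
    have key : ‖μ‖ * (c * x i) ≤ m * (c * x i) := by
      calc ‖μ‖ * (c * x i) = ‖μ * v i‖ := by
            rw [norm_mul, hvi]
        _ = ‖∑ j, (A i j : ℂ) * v j‖ := by rw [hv' i]
        _ ≤ ∑ j, ‖(A i j : ℂ) * v j‖ := norm_sum_le _ _
        _ = ∑ j, A i j * ‖v j‖ := by
            refine Finset.sum_congr rfl fun j _ => ?_
            rw [norm_mul, Complex.norm_real, Real.norm_eq_abs, abs_of_nonneg (hnonneg i j)]
        _ ≤ ∑ j, A i j * (c * x j) := by
            refine Finset.sum_le_sum fun j _ =>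
              mul_le_mul_of_nonneg_left (hle j) (hnonneg i j)
        _ = c * ∑ j, A i j * x j := by
            rw [Finset.mul_sum]; refine Finset.sum_congr rfl fun j _ => by ring
        _ = m * (c * x i) := by rw [hAx]; ring
    exact le_of_mul_le_mul_right key (mul_pos hcpos (hx i))
  -- conclude
  have hmem : m ∈ {r : ℝ | ∃ μ : ℂ, (B.charpoly).IsRoot μ ∧ r = ‖μ‖} :=
    ⟨(m : ℂ), hroot, by rw [Complex.norm_real, Real.norm_eq_abs, abs_of_nonneg hm]⟩
  rw [perronValue]
  apply le_antisymm
  · exact csSup_le ⟨m, hmem⟩ (by rintro r ⟨μ, hμ, rfl⟩; exact hbound μ hμ)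
  · exact le_csSup ⟨m, by rintro r ⟨μ, hμ, rfl⟩; exact hbound μ hμ⟩ hmem

/-- Let `A` be `n × n` (`n ≥ 2`) irreducible and nonnegative, `x` entrywise
positive and not a Perron vector of `A`.
(i) If `min_i (A²x)_i/(Ax)_i ≥ (Ax)_j/x_j` for every `j`, then
`min_i (A²x)_i/(Ax)_i > min_i (Ax)_i/x_i`.
(ii) If there are indices `i₀, j₀` with
`(Ax)_{j₀}/x_{j₀} > min_i (A²x)_i/(Ax)_i = (A²x)_{i₀}/(Ax)_{i₀}` and `A i₀ j₀ ≠ 0`, then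
`min_i (A²x)_i/(Ax)_i > min_i (Ax)_i/x_i`. -/
theorem min_ratio_strict_increase {n : ℕ} (hn : 2 ≤ n)
    (A : Matrix (Fin n) (Fin n) ℝ) (x : Fin n → ℝ)
    (hirr : IsIrreducibleMatrix A) (hnonneg : ∀ i j, 0 ≤ A i j) (hx : ∀ i, 0 < x i)
    (hnp : ¬ IsPerronVector A x) :
    ((∀ j, A.mulVec x j / x j ≤ ⨅ i, A.mulVec (A.mulVec x) i / A.mulVec x i) →
      (⨅ i, A.mulVec x i / x i) < ⨅ i, A.mulVec (A.mulVec x) i / A.mulVec x i) ∧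
    (∀ i₀ j₀ : Fin n,
      (⨅ i, A.mulVec (A.mulVec x) i / A.mulVec x i) < A.mulVec x j₀ / x j₀ →
      (⨅ i, A.mulVec (A.mulVec x) i / A.mulVec x i)
          = A.mulVec (A.mulVec x) i₀ / A.mulVec x i₀ →
      A i₀ j₀ ≠ 0 →
      (⨅ i, A.mulVec x i / x i) < ⨅ i, A.mulVec (A.mulVec x) i / A.mulVec x i) := by
  have hn0 : 0 < n := by omega
  set y := A.mulVec x with hy_def
  set z := A.mulVec y with hz_def
  have hy : ∀ i, 0 < y i := mulVec_pos_aux hn A hirr hnonneg hx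
  have hz : ∀ i, 0 < z i := mulVec_pos_aux hn A hirr hnonneg hy
  set m := ⨅ i, y i / x i with hm_def
  set M := ⨅ i, z i / y i with hM_def
  have hbb : BddBelow (Set.range fun i => y i / x i) :=
    Set.Finite.bddBelow (Set.finite_range _)
  have hbb' : BddBelow (Set.range fun i => z i / y i) :=
    Set.Finite.bddBelow (Set.finite_range _)
  have hm_le : ∀ j, m ≤ y j / x j := fun j => ciInf_le hbb j
  have hM_le : ∀ j, M ≤ z j / y j := fun j => ciInf_le hbb' j
  have hmx : ∀ j, m * x j ≤ y j := by
    intro j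
    have := hm_le j
    rwa [le_div_iff₀ (hx j)] at this
  have hysum : ∀ i, y i = ∑ j, A i j * x j := by
    intro i; rw [hy_def, Matrix.mulVec, dotProduct]
  have hzsum : ∀ i, z i = ∑ j, A i j * y j := by
    intro i; rw [hz_def, Matrix.mulVec, dotProduct]
  have key : ∀ i, m * y i ≤ z i := by
    intro i
    calc m * y i = ∑ j, A i j * (m * x j) := by
          rw [hysum i, Finset.mul_sum]
          exact Finset.sum_congr rfl fun j _ => by ring
      _ ≤ ∑ j, A i j * y j :=
          Finset.sum_le_sum fun j _ => mul_le_mul_of_nonneg_left (hmx j) (hnonneg i j)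
      _ = z i := (hzsum i).symm
  haveI : Nonempty (Fin n) := ⟨⟨0, hn0⟩⟩
  have hmM : m ≤ M := le_ciInf fun i => (le_div_iff₀ (hy i)).mpr (by linarith [key i])
  constructor
  · intro hyp
    by_contra hlt
    push_neg at hlt
    have hMm : M ≤ m := hlt
    have hall : ∀ j, y j = m * x j := by
      intro j
      have h1 : y j / x j ≤ m := le_trans (hyp j) hMm
      have h2 : y j / x j = m := le_antisymm h1 (hm_le j)
      rw [div_eq_iff (hx j).ne'] at h2
      rw [h2]
    have heig : A.mulVec x = m • x := by
      funext j
      rw [← hy_def]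
      simp [hall j]
    have hm0 : 0 ≤ m := by
      have := hall ⟨0, hn0⟩
      nlinarith [hy ⟨0, hn0⟩, hx ⟨0, hn0⟩]
    exact hnp ⟨fun h => (hx ⟨0, hn0⟩).ne' (congrFun h ⟨0, hn0⟩),
      by rw [perronValue_eq_aux hn0 A hnonneg hx hm0 heig]; exact heig⟩
  · intro i₀ j₀ h1 h2 h3
    by_contra hlt
    push_neg at hlt
    have hMm : M = m := le_antisymm hlt hmM
    have hyj : m * x j₀ < y j₀ := by
      rw [hMm] at h1
      rwa [lt_div_iff₀ (hx j₀)] at h1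
    have hstrict : m * y i₀ < z i₀ := by
      calc m * y i₀ = ∑ j, A i₀ j * (m * x j) := by
            rw [hysum i₀, Finset.mul_sum]
            exact Finset.sum_congr rfl fun j _ => by ring
        _ < ∑ j, A i₀ j * y j := by
            apply Finset.sum_lt_sum
              (fun j _ => mul_le_mul_of_nonneg_left (hmx j) (hnonneg i₀ j))
            exact ⟨j₀, Finset.mem_univ j₀,
              (mul_lt_mul_iff_right₀ (lt_of_le_of_ne (hnonneg i₀ j₀) (Ne.symm h3))).mpr hyj⟩
        _ = z i₀ := (hzsum i₀).symm
    have : m < z i₀ / y i₀ := (lt_div_iff₀ (hy i₀)).mpr (by linarith)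
    rw [← h2, hMm] at this
    exact lt_irrefl m this
end

section
/- Let A be an n×n real matrix with all entries positive and let x ∈ ℝ^n have all entries positive. If x is not a Perron vector of A, then max_{1≤i≤n} (A²x)_i/(Ax)_i < max_{1≤i≤n} (Ax)_i/x_i and min_{1≤i≤n} (Ax)_i/x_i < min_{1≤i≤n} (A²x)_i/(Ax)_i. -/
open Matrix

open Polynomial

/-- Evaluation of the characteristic polynomial. -/
lemma my_eval_charpoly {n : ℕ} (M : Matrix (Fin n) (Fin n) ℂ) (μ : ℂ) :
    M.charpoly.eval μ = (Matrix.scalar (Fin n) μ - M).det := by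
  rw [Matrix.charpoly, eval_det, matPolyEquiv_charmatrix]
  simp

lemma my_charpoly_isRoot_iff {n : ℕ} (M : Matrix (Fin n) (Fin n) ℂ) (μ : ℂ) :
    M.charpoly.IsRoot μ ↔ ∃ v : Fin n → ℂ, v ≠ 0 ∧ M.mulVec v = μ • v := by
  rw [Polynomial.IsRoot, my_eval_charpoly, ← Matrix.exists_mulVec_eq_zero_iff]
  constructor
  · rintro ⟨v, hv, hMv⟩
    refine ⟨v, hv, ?_⟩
    have hsc : (Matrix.scalar (Fin n) μ).mulVec v = μ • v := by
      funext i
      simp [Matrix.scalar, Matrix.mulVec_diagonal, Pi.algebraMap_apply]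
    rw [Matrix.sub_mulVec, hsc] at hMv
    linear_combination (norm := module) -hMv
  · rintro ⟨v, hv, hMv⟩
    refine ⟨v, hv, ?_⟩
    rw [Matrix.sub_mulVec]
    have hsc : (Matrix.scalar (Fin n) μ).mulVec v = μ • v := by
      funext i
      simp [Matrix.scalar, Matrix.mulVec_diagonal, Pi.algebraMap_apply]
    rw [hsc, hMv, sub_self]

lemma my_perronValue_eq {n : ℕ} (hn : 0 < n) (A : Matrix (Fin n) (Fin n) ℝ)
    (x : Fin n → ℝ) (hA : ∀ i j, 0 < A i j) (hx : ∀ i, 0 < x i) {l : ℝ}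
    (hl : A.mulVec x = l • x) : perronValue A = l := by
  haveI : Nonempty (Fin n) := ⟨⟨0, hn⟩⟩
  have hApos : ∀ i, 0 < A.mulVec x i := fun i =>
    Finset.sum_pos (fun j _ => mul_pos (hA i j) (hx j)) ⟨⟨0, hn⟩, Finset.mem_univ _⟩
  obtain ⟨i0⟩ : Nonempty (Fin n) := inferInstance
  have hlpos : 0 < l := by
    have h1 := hApos i0
    rw [hl] at h1
    simp only [Pi.smul_apply, smul_eq_mul] at h1
    nlinarith [hx i0]
  set B := A.map Complex.ofReal with hB
  have hgr : IsGreatest {r : ℝ | ∃ μ : ℂ, (B.charpoly).IsRoot μ ∧ r = ‖μ‖} l := by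
    constructor
    · refine ⟨(l : ℂ), ?_, by simp [abs_of_pos hlpos]⟩
      rw [my_charpoly_isRoot_iff]
      refine ⟨fun i => (x i : ℂ), ?_, ?_⟩
      · intro h
        have := congrFun h i0
        simp only [Pi.zero_apply, Complex.ofReal_eq_zero] at this
        exact (hx i0).ne' this
      · funext i
        have := congrFun hl i
        simp only [Matrix.mulVec, dotProduct, Pi.smul_apply, smul_eq_mul] at this ⊢
        simp only [hB, Matrix.map_apply]
        push_cast
        exact_mod_cast congrArg Complex.ofReal this
    · rintro r ⟨μ, hroot, rfl⟩
      rw [my_charpoly_isRoot_iff] at hroot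
      obtain ⟨v, hv, hMv⟩ := hroot
      obtain ⟨i0, -, hi0⟩ := Finset.exists_max_image Finset.univ
        (fun i => ‖v i‖ / x i) ⟨i0, Finset.mem_univ _⟩
      set c := ‖v i0‖ / x i0 with hc
      have hcpos : 0 < c := by
        obtain ⟨j, hj⟩ := Function.ne_iff.mp hv
        have hj' : 0 < ‖v j‖ / x j :=
          div_pos (by simpa using hj) (hx j)
        exact lt_of_lt_of_le hj' (hi0 j (Finset.mem_univ _))
      have hbound : ∀ j, ‖v j‖ ≤ c * x j := fun j =>
        (div_le_iff₀ (hx j)).mp (hi0 j (Finset.mem_univ _))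
      have key : ‖μ‖ * (c * x i0) ≤ l * (c * x i0) := by
        have hvi0 : ‖v i0‖ = c * x i0 := by
          rw [hc, div_mul_cancel₀ _ (hx i0).ne']
        have h1 : ‖μ‖ * ‖v i0‖ = ‖(B.mulVec v) i0‖ := by
          rw [hMv]; simp
        have h2 : ‖(B.mulVec v) i0‖ ≤ ∑ j, A i0 j * ‖v j‖ := by
          refine le_trans (norm_sum_le Finset.univ (fun j => B i0 j * v j)) ?_
          refine Finset.sum_le_sum fun j _ => ?_
          simp [hB, Matrix.map_apply, abs_of_pos (hA i0 j)]
        have h3 : ∑ j, A i0 j * ‖v j‖ ≤ ∑ j, A i0 j * (c * x j) :=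
          Finset.sum_le_sum fun j _ => mul_le_mul_of_nonneg_left (hbound j) (hA i0 j).le
        have h4 : ∑ j, A i0 j * (c * x j) = c * A.mulVec x i0 := by
          rw [Matrix.mulVec, dotProduct, Finset.mul_sum]
          exact Finset.sum_congr rfl fun j _ => by ring
        have h5 : A.mulVec x i0 = l * x i0 := by
          have := congrFun hl i0; simpa using this
        calc ‖μ‖ * (c * x i0) = ‖μ‖ * ‖v i0‖ := by rw [hvi0]
          _ ≤ c * (l * x i0) := by rw [h1]; exact le_trans h2 (h3.trans (by rw [h4, h5]))
          _ = l * (c * x i0) := by ring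
      exact le_of_mul_le_mul_right key (mul_pos hcpos (hx i0))
  exact hgr.csSup_eq


/-- Let `A` be an `n × n` entrywise positive real matrix and `x` entrywise
positive. If `x` is not a Perron vector of `A`, then
`max_i (A²x)_i/(Ax)_i < max_i (Ax)_i/x_i` and `min_i (Ax)_i/x_i < min_i (A²x)_i/(Ax)_i`. -/
theorem ratio_strict_monotone_of_positive_matrix {n : ℕ} (hn : 0 < n)
    (A : Matrix (Fin n) (Fin n) ℝ) (x : Fin n → ℝ)
    (hA : ∀ i j, 0 < A i j) (hx : ∀ i, 0 < x i)
    (hnp : ¬ IsPerronVector A x) :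
    (⨆ i, A.mulVec (A.mulVec x) i / A.mulVec x i) < (⨆ i, A.mulVec x i / x i) ∧
    (⨅ i, A.mulVec x i / x i) < ⨅ i, A.mulVec (A.mulVec x) i / A.mulVec x i := by
  haveI : Nonempty (Fin n) := ⟨⟨0, hn⟩⟩
  set y := A.mulVec x with hy
  have hypos : ∀ i, 0 < y i := fun i =>
    Finset.sum_pos (fun j _ => mul_pos (hA i j) (hx j)) ⟨⟨0, hn⟩, Finset.mem_univ _⟩
  set z := A.mulVec y with hz
  have hxne : x ≠ 0 := fun h => (hx ⟨0, hn⟩).ne' (congrFun h ⟨0, hn⟩)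
  have noeig : ∀ l : ℝ, y ≠ l • x := by
    intro l h
    exact hnp ⟨hxne, by rw [← hy, my_perronValue_eq hn A x hA hx h]; exact h⟩
  constructor
  · set r := ⨆ i, y i / x i with hr
    have hub : ∀ j, y j ≤ r * x j := fun j => by
      have := le_ciSup (Set.Finite.bddAbove (Set.finite_range _)) j (f := fun i => y i / x i)
      exact (div_le_iff₀ (hx j)).mp this
    have hstrict : ∃ j, y j < r * x j := by
      by_contra h
      push_neg at h
      exact noeig r (funext fun j => le_antisymm (hub j) (h j))
    obtain ⟨j0, hj0⟩ := hstrict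
    have key : ∀ i, z i < r * y i := by
      intro i
      have : z i < ∑ j, A i j * (r * x j) := by
        refine Finset.sum_lt_sum (fun j _ => mul_le_mul_of_nonneg_left (hub j) (hA i j).le)
          ⟨j0, Finset.mem_univ _, by
            exact mul_lt_mul_of_pos_left hj0 (hA i j0)⟩
      calc z i < ∑ j, A i j * (r * x j) := this
        _ = r * y i := by
            rw [hy, Matrix.mulVec, dotProduct, Finset.mul_sum]
            exact Finset.sum_congr rfl fun j _ => by ring
    obtain ⟨i, hi⟩ := exists_eq_ciSup_of_finite (f := fun i => z i / y i)
    rw [← hi, div_lt_iff₀ (hypos i)]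
    calc z i < r * y i := key i
      _ ≤ (⨆ i, y i / x i) * y i := le_refl _
  · set s := ⨅ i, y i / x i with hs
    have hlb : ∀ j, s * x j ≤ y j := fun j => by
      have := ciInf_le (Set.Finite.bddBelow (Set.finite_range _)) j (f := fun i => y i / x i)
      exact (le_div_iff₀ (hx j)).mp this
    have hstrict : ∃ j, s * x j < y j := by
      by_contra h
      push_neg at h
      exact noeig s (funext fun j => le_antisymm (h j) (hlb j))
    obtain ⟨j0, hj0⟩ := hstrict
    have key : ∀ i, s * y i < z i := by
      intro i
      have : (∑ j, A i j * (s * x j)) < z i := by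
        refine Finset.sum_lt_sum (fun j _ => mul_le_mul_of_nonneg_left (hlb j) (hA i j).le)
          ⟨j0, Finset.mem_univ _, mul_lt_mul_of_pos_left hj0 (hA i j0)⟩
      calc s * y i = ∑ j, A i j * (s * x j) := by
            rw [hy, Matrix.mulVec, dotProduct, Finset.mul_sum]
            exact Finset.sum_congr rfl fun j _ => by ring
        _ < z i := this
    obtain ⟨i, hi⟩ := exists_eq_ciInf_of_finite (f := fun i => z i / y i)
    rw [← hi, lt_div_iff₀ (hypos i)]
    exact key i
end
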